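/- For all integers a, b, c, d, e, m: (J(d−a)·j(e−b) − J(e−a)·j(d−b))·J(m−c) = (J(d−c)·j(e−b) − J(e−c)·j(d−b))·J(m−a) + (J(d−a)·J(e−c) − J(e−a)·J(d−c))·j(m−b). -/

import Mathlib

/-- Binet-type closed form for any sequence satisfying the Jacobsthal
recurrence on all of ℤ. -/
lemma binet_aux (f : ℤ → ℚ)
    (hf : ∀ n : ℤ, f n = f (n - 1) + 2 * f (n - 2)) (A B : ℚ)
    (h0 : f 0 = A + B) (h1 : f 1 = 2 * A - B) :
    ∀ n : ℤ, f n = A * (2 : ℚ) ^ n + B * (-1 : ℚ) ^ n := by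
  have P2 : ∀ n : ℤ, (2 : ℚ) ^ (n + 1) = 2 * (2 : ℚ) ^ n := fun n => by
    rw [zpow_add₀ (by norm_num : (2:ℚ) ≠ 0)]; ring
  have P1 : ∀ n : ℤ, (-1 : ℚ) ^ (n + 1) = -(-1 : ℚ) ^ n := fun n => by
    rw [zpow_add₀ (by norm_num : (-1:ℚ) ≠ 0)]; ring
  have key : ∀ n : ℤ, f n = A * (2 : ℚ) ^ n + B * (-1 : ℚ) ^ n ∧
      f (n + 1) = A * (2 : ℚ) ^ (n + 1) + B * (-1 : ℚ) ^ (n + 1) := by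
    intro n
    induction n using Int.induction_on with
    | zero => simpa [h0, h1, P2, P1] using by ring
    | succ k ih =>
      refine ⟨ih.2, ?_⟩
      have h := hf ((k : ℤ) + 1 + 1)
      rw [show ((k : ℤ) + 1 + 1 - 1) = (k : ℤ) + 1 by ring,
        show ((k : ℤ) + 1 + 1 - 2) = (k : ℤ) by ring, ih.1, ih.2] at h
      simp only [P2, P1] at h ⊢
      rw [h]; ring
    | pred k ih =>
      have ex : -(k : ℤ) = -(k : ℤ) - 1 + 1 := by ring
      have h := hf (-(k : ℤ) - 1 + 1 + 1)
      rw [show (-(k : ℤ) - 1 + 1 + 1 - 1) = -(k : ℤ) - 1 + 1 by ring,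
        show (-(k : ℤ) - 1 + 1 + 1 - 2) = -(k : ℤ) - 1 by ring] at h
      have i1 : f (-(k : ℤ) - 1 + 1) = A * (2:ℚ) ^ (-(k : ℤ) - 1 + 1)
          + B * (-1:ℚ) ^ (-(k : ℤ) - 1 + 1) := by rw [← ex]; exact ih.1
      have i2 : f (-(k : ℤ) - 1 + 1 + 1) = A * (2:ℚ) ^ (-(k : ℤ) - 1 + 1 + 1)
          + B * (-1:ℚ) ^ (-(k : ℤ) - 1 + 1 + 1) := by
        rw [show -(k : ℤ) - 1 + 1 + 1 = -(k : ℤ) + 1 by ring]; exact ih.2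
      rw [i1, i2] at h
      simp only [P2, P1] at h
      have g1 : f (-(k : ℤ) - 1) = A * (2:ℚ) ^ (-(k : ℤ) - 1)
          + B * (-1:ℚ) ^ (-(k : ℤ) - 1) := by linarith
      exact ⟨g1, i1⟩
  exact fun n => (key n).1

/-- Identity for Jacobsthal and Jacobsthal–Lucas numbers extended to all
integers. -/
theorem stmt_5 (J j : ℤ → ℚ)
    (hJ0 : J 0 = 0) (hJ1 : J 1 = 1)
    (hJ : ∀ n : ℤ, J n = J (n - 1) + 2 * J (n - 2))
    (hj0 : j 0 = 2) (hj1 : j 1 = 1)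
    (hj : ∀ n : ℤ, j n = j (n - 1) + 2 * j (n - 2))
    (a b c d e m : ℤ) :
    (J (d - a) * j (e - b) - J (e - a) * j (d - b)) * J (m - c)
      = (J (d - c) * j (e - b) - J (e - c) * j (d - b)) * J (m - a)
        + (J (d - a) * J (e - c) - J (e - a) * J (d - c)) * j (m - b) := by
  have hJc : ∀ n : ℤ, J n = (1/3 : ℚ) * (2 : ℚ) ^ n + (-1/3 : ℚ) * (-1 : ℚ) ^ n :=
    binet_aux J hJ (1/3) (-1/3) (by rw [hJ0]; ring) (by rw [hJ1]; ring)
  have hjc : ∀ n : ℤ, j n = (1 : ℚ) * (2 : ℚ) ^ n + (1 : ℚ) * (-1 : ℚ) ^ n :=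
    binet_aux j hj 1 1 (by rw [hj0]; ring) (by rw [hj1]; ring)
  simp only [hJc, hjc]
  have h2 : (2 : ℚ) ≠ 0 := by norm_num
  have h1 : (-1 : ℚ) ≠ 0 := by norm_num
  simp only [zpow_sub₀ h2, zpow_sub₀ h1]
  have p2 : ∀ x : ℤ, (2 : ℚ) ^ x ≠ 0 := fun x => zpow_ne_zero x h2
  have p1 : ∀ x : ℤ, (-1 : ℚ) ^ x ≠ 0 := fun x => zpow_ne_zero x h1
  field_simp
  ring
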